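/- In the reduction graph G built from a monotone CNF formula φ with n variables and m clauses — consisting of a path ℓ_i, x_i⁺, x_i⁻, r_i for each variable x_i, and a clause vertex c_j adjacent to the literal vertices of its clause — any minimal vertex cover X of G satisfies |X ∩ {ℓ_i, x_i⁺, x_i⁻, r_i}| = 2 for every i; consequently every minimal vertex cover has size at most 2n + m, with equality if and only if X contains all clause vertices. -/
import Mathlib


def IsVC {V : Type*} (G : SimpleGraph V) (X : Finset V) : Prop :=
  ∀ ⦃a b : V⦄, G.Adj a b → a ∈ X ∨ b ∈ X

def IsMinVC {V : Type*} (G : SimpleGraph V) (X : Finset V) : Prop :=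
  IsVC G X ∧ ∀ Y : Finset V, Y ⊂ X → ¬ IsVC G Y

/-- The reduction graph built from a monotone CNF formula with `n` variables
and `m` clauses.  Variable gadget `i` is the path `ℓᵢ, xᵢ⁺, xᵢ⁻, rᵢ`, encoded
as `Sum.inl (i, 0), Sum.inl (i, 1), Sum.inl (i, 2), Sum.inl (i, 3)`; the clause
vertex `Sum.inr j` is adjacent to `xᵢ⁺` whenever `i ∈ pos j` and to `xᵢ⁻`
whenever `i ∈ neg j`. -/
def RedGraph (n m : ℕ) (pos neg : Fin m → Finset (Fin n)) :
    SimpleGraph ((Fin n × Fin 4) ⊕ Fin m) :=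
  SimpleGraph.fromRel (fun a b =>
    match a, b with
    | Sum.inl (i, p), Sum.inl (i', q) =>
        i = i' ∧ ((p = 0 ∧ q = 1) ∨ (p = 1 ∧ q = 2) ∨ (p = 2 ∧ q = 3))
    | Sum.inr j, Sum.inl (i, p) => (p = 1 ∧ i ∈ pos j) ∨ (p = 2 ∧ i ∈ neg j)
    | _, _ => False)

namespace RedAux

variable {n m : ℕ} {pos neg : Fin m → Finset (Fin n)}

lemma adj01 (i : Fin n) : (RedGraph n m pos neg).Adj (Sum.inl (i,0)) (Sum.inl (i,1)) := by
  simp [RedGraph, SimpleGraph.fromRel_adj]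

lemma adj12 (i : Fin n) : (RedGraph n m pos neg).Adj (Sum.inl (i,1)) (Sum.inl (i,2)) := by
  simp [RedGraph, SimpleGraph.fromRel_adj]

lemma adj23 (i : Fin n) : (RedGraph n m pos neg).Adj (Sum.inl (i,2)) (Sum.inl (i,3)) := by
  simp [RedGraph, SimpleGraph.fromRel_adj]

lemma nbr0 {i : Fin n} {v} (h : (RedGraph n m pos neg).Adj (Sum.inl (i,0)) v) :
    v = Sum.inl (i,1) := by
  rcases v with ⟨i', q⟩ | j <;>
    rw [RedGraph, SimpleGraph.fromRel_adj] at h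
  · obtain ⟨hne, h | h⟩ := h
    · obtain ⟨rfl, h⟩ := h
      rcases h with ⟨-, rfl⟩ | ⟨h, -⟩ | ⟨h, -⟩ <;> simp_all
    · obtain ⟨rfl, h⟩ := h
      rcases h with ⟨h1, h2⟩ | ⟨h1, h2⟩ | ⟨h1, h2⟩ <;> simp_all
  · obtain ⟨hne, h | h⟩ := h
    · exact h.elim
    · rcases h with ⟨h, -⟩ | ⟨h, -⟩ <;> simp_all

lemma nbr3 {i : Fin n} {v} (h : (RedGraph n m pos neg).Adj (Sum.inl (i,3)) v) :
    v = Sum.inl (i,2) := by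
  rcases v with ⟨i', q⟩ | j <;>
    rw [RedGraph, SimpleGraph.fromRel_adj] at h
  · obtain ⟨hne, h | h⟩ := h
    · obtain ⟨rfl, h⟩ := h
      rcases h with ⟨h, -⟩ | ⟨h, -⟩ | ⟨h, -⟩ <;> simp_all
    · obtain ⟨rfl, h⟩ := h
      rcases h with ⟨h1, h2⟩ | ⟨h1, h2⟩ | ⟨h1, h2⟩ <;> simp_all
  · obtain ⟨hne, h | h⟩ := h
    · exact h.elim
    · rcases h with ⟨h, -⟩ | ⟨h, -⟩ <;> simp_all

end RedAux


open RedAux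

/-- Any minimal vertex cover of the reduction graph contains exactly two
vertices of each variable path; consequently it has size at most `2n + m`, with
equality iff it contains all clause vertices. -/
theorem redgraph_minimal_vc_structure (n m : ℕ) (pos neg : Fin m → Finset (Fin n))
    (hmono : ∀ j : Fin m, pos j = ∅ ∨ neg j = ∅)
    (X : Finset ((Fin n × Fin 4) ⊕ Fin m))
    (hX : IsMinVC (RedGraph n m pos neg) X) :
    (∀ i : Fin n,
      (X.filter (fun v => ∃ p : Fin 4, v = Sum.inl (i, p))).card = 2) ∧
    X.card ≤ 2 * n + m ∧
    (X.card = 2 * n + m ↔ ∀ j : Fin m, (Sum.inr j : (Fin n × Fin 4) ⊕ Fin m) ∈ X) := by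
  obtain ⟨hcov, hmin⟩ := hX
  -- every vertex of X has a neighbor outside X
  have key : ∀ v ∈ X, ∃ u, (RedGraph n m pos neg).Adj v u ∧ u ∉ X := by
    intro v hv
    have hss : X.erase v ⊂ X := Finset.erase_ssubset hv
    have := hmin _ hss
    rw [IsVC] at this
    push_neg at this
    obtain ⟨a, b, hab, ha, hb⟩ := this
    rcases hcov hab with h | h
    · have hav : a = v := by
        by_contra hne
        exact ha (Finset.mem_erase.2 ⟨hne, h⟩)
      subst hav
      refine ⟨b, hab, fun hbX => hb (Finset.mem_erase.2 ⟨?_, hbX⟩)⟩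
      rintro rfl; exact (RedGraph n m pos neg).irrefl hab
    · have hbv : b = v := by
        by_contra hne
        exact hb (Finset.mem_erase.2 ⟨hne, h⟩)
      subst hbv
      refine ⟨a, hab.symm, fun haX => ha (Finset.mem_erase.2 ⟨?_, haX⟩)⟩
      rintro rfl; exact (RedGraph n m pos neg).irrefl hab
  have main : ∀ i : Fin n,
      (X.filter (fun v => ∃ p : Fin 4, v = Sum.inl (i, p))).card = 2 := by
    intro i
    have h01 := hcov (adj01 (pos := pos) (neg := neg) i)
    have h12 := hcov (adj12 (pos := pos) (neg := neg) i)
    have h23 := hcov (adj23 (pos := pos) (neg := neg) i)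
    have hA : Sum.inl (i, (0:Fin 4)) ∈ X → Sum.inl (i, (1:Fin 4)) ∉ X := by
      intro hA hB
      obtain ⟨u, hu, hunx⟩ := key _ hA
      rw [nbr0 hu] at hunx
      exact hunx hB
    have hD : Sum.inl (i, (3:Fin 4)) ∈ X → Sum.inl (i, (2:Fin 4)) ∉ X := by
      intro hD hC
      obtain ⟨u, hu, hunx⟩ := key _ hD
      rw [nbr3 hu] at hunx
      exact hunx hC
    have hfe : X.filter (fun v => ∃ p : Fin 4, v = Sum.inl (i, p)) =
        ({Sum.inl (i,0), Sum.inl (i,1), Sum.inl (i,2), Sum.inl (i,3)} :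
          Finset ((Fin n × Fin 4) ⊕ Fin m)).filter (· ∈ X) := by
      ext v
      simp only [Finset.mem_filter, Finset.mem_insert, Finset.mem_singleton]
      constructor
      · rintro ⟨hv, p, rfl⟩
        refine ⟨?_, hv⟩
        fin_cases p <;> simp
      · rintro ⟨h, hv⟩
        refine ⟨hv, ?_⟩
        rcases h with rfl | rfl | rfl | rfl
        exacts [⟨0, rfl⟩, ⟨1, rfl⟩, ⟨2, rfl⟩, ⟨3, rfl⟩]
    rw [hfe]
    by_cases hA' : Sum.inl (i,(0:Fin 4)) ∈ X <;>
      by_cases hB' : Sum.inl (i,(1:Fin 4)) ∈ X <;>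
      by_cases hC' : Sum.inl (i,(2:Fin 4)) ∈ X <;>
      by_cases hD' : Sum.inl (i,(3:Fin 4)) ∈ X <;>
      first
        | exact absurd hB' (hA hA')
        | exact absurd hC' (hD hD')
        | tauto
        | simp [Finset.filter_insert, Finset.filter_singleton, hA', hB', hC', hD']
  -- cardinality decomposition
  have hsplit : X.card =
      (X.filter (fun v => v.isLeft)).card + (X.filter (fun v => ¬ v.isLeft)).card :=
    (Finset.card_filter_add_card_filter_not _).symm
  have hleft : (X.filter (fun v => v.isLeft)).card = 2 * n := by
    have he : X.filter (fun v => v.isLeft) =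
        Finset.univ.biUnion
          (fun i : Fin n => X.filter (fun v => ∃ p : Fin 4, v = Sum.inl (i, p))) := by
      ext v
      rcases v with ⟨i, p⟩ | j <;> simp
    rw [he, Finset.card_biUnion]
    · simp [main, Finset.sum_const, mul_comm]
    · intro a _ b _ hab
      simp only [Finset.disjoint_left, Finset.mem_filter]
      rintro v ⟨-, p, rfl⟩ ⟨-, q, hq⟩
      simp only [Sum.inl.injEq, Prod.mk.injEq] at hq
      exact hab (hq.1.symm ▸ rfl)
  have hright : (X.filter (fun v => ¬ v.isLeft)) =
      (Finset.univ.filter (fun j : Fin m => Sum.inr j ∈ X)).image Sum.inr := by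
    ext v
    rcases v with ⟨i, p⟩ | j <;> simp
  have hrc : (X.filter (fun v => ¬ v.isLeft)).card =
      (Finset.univ.filter (fun j : Fin m => Sum.inr j ∈ X)).card := by
    rw [hright, Finset.card_image_of_injective _ Sum.inr_injective]
  have hcard : X.card = 2 * n +
      (Finset.univ.filter (fun j : Fin m => Sum.inr j ∈ X)).card := by
    rw [hsplit, hleft, hrc]
  refine ⟨main, ?_, ?_⟩
  · rw [hcard]
    have : (Finset.univ.filter (fun j : Fin m => Sum.inr j ∈ X)).card ≤ m := by
      simpa using Finset.card_filter_le Finset.univ (fun j : Fin m => Sum.inr j ∈ X)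
    omega
  · rw [hcard]
    constructor
    · intro h j
      have hc : (Finset.univ.filter (fun j : Fin m => Sum.inr j ∈ X)).card = m := by omega
      have : (Finset.univ.filter (fun j : Fin m => Sum.inr j ∈ X)) = Finset.univ := by
        apply Finset.eq_univ_of_card
        simpa using hc
      have := Finset.eq_univ_iff_forall.mp this j
      simpa using this
    · intro h
      have : (Finset.univ.filter (fun j : Fin m => Sum.inr j ∈ X)) = Finset.univ := by
        apply Finset.eq_univ_iff_forall.mpr
        intro j; simpa using h j
      rw [this]
      simp
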